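/- (Refining Criterion) Let g_1, …, g_ℓ be nonzero polynomials in K[x_1,…,x_n] and let t_k ∈ supp(g_k) for each k. For each k, let P_k = { u ∈ supp(g_k) : there exists a monomial order μ such that lt_μ(g_j) = t_j for all j = 1, …, k−1 and lt_μ(g_k) = u } (the compatible leading terms of g_k). Then for every monomial order σ, the following are equivalent: (i) for every k and every u ∈ supp(g_k) with u ≠ t_k, u ≺_σ t_k; (ii) for every k and every u ∈ P_k with u ≠ t_k, u ≺_σ t_k. In particular, lt_σ(g_k) = t_k for all k if and only if σ satisfies the restricted system (ii). -/

import Mathlib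

open scoped MonomialOrder

/-- `t` is the leading exponent of `g` with respect to the monomial order `μ`:
it lies in the support of `g` and dominates every exponent in the support. -/
def IsLeadingExp {n : ℕ} {K : Type*} [Field K] (μ : MonomialOrder (Fin n))
    (g : MvPolynomial (Fin n) K) (t : Fin n →₀ ℕ) : Prop :=
  t ∈ g.support ∧ ∀ u ∈ g.support, u ≼[μ] t


section Shrink
universe v

/-- Transport a monomial order on `Fin n →₀ ℕ` so that its synonym type lives in
an arbitrary universe `v`. -/
noncomputable def MonomialOrder.shrink {n : ℕ} (m : MonomialOrder (Fin n)) :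
    MonomialOrder (Fin n) :=
  letI T := ULift.{v} (Fin n →₀ ℕ)
  letI f : T → m.syn := fun x => m.toSyn x.down
  haveI hf : Function.Injective f := fun a b h => ULift.ext _ _ (m.toSyn.injective h)
  letI acmT : AddCommMonoid T := ULift.addCommMonoid
  letI loT : LinearOrder T := LinearOrder.lift' f hf
  letI iomT : @IsOrderedAddMonoid T acmT loT.toPreorder :=
    @IsOrderedAddMonoid.mk T acmT loT.toPreorder (fun a b h c => by
        show m.toSyn (a + c).down ≤ m.toSyn (b + c).down
        rw [ULift.add_down, ULift.add_down, map_add, map_add]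
        exact add_le_add_left (α := m.syn) h _) (fun a b h c => by
        show m.toSyn (c + a).down ≤ m.toSyn (c + b).down
        rw [ULift.add_down, ULift.add_down, map_add, map_add]
        exact add_le_add_right (α := m.syn) h _)
  { syn := T
    addCommMonoidSyn := acmT
    linearOrderSyn := loT
    isOrderedAddMonoid_syn := iomT
    toSyn := AddEquiv.ulift.symm
    toSyn_monotone := fun a b h => m.toSyn_monotone h
    wellFoundedLT_syn := by
      constructor
      have hwf : WellFounded (fun x y : T => f x < f y) :=
        InvImage.wf f (wellFounded_lt)
      refine Subrelation.wf (q := fun x y : T => f x < f y) ?_ hwf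
      intro x y h
      exact h }

lemma MonomialOrder.shrink_le {n : ℕ} (m : MonomialOrder (Fin n)) (a b : Fin n →₀ ℕ) :
    ((MonomialOrder.shrink.{v} m).toSyn a ≤ (MonomialOrder.shrink.{v} m).toSyn b) ↔
      (m.toSyn a ≤ m.toSyn b) := Iff.rfl

end Shrink

/-- **Refining Criterion.** Given nonzero polynomials `g 0, …, g (ℓ-1)` and a
choice `t k ∈ supp (g k)`, let `P k` be the set of compatible leading terms of
`g k` (those `u` in the support of `g k` that are the leading exponent of `g k`
for some monomial order `μ` selecting `t j` as leading exponent of `g j` for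
all `j < k`). Then for any monomial order `σ`, the full system of inequalities
`u ≺ t k` for all `u ∈ supp (g k) \ {t k}` is equivalent to the restricted
system ranging only over `u ∈ P k \ {t k}`; in particular `σ` selects all the
`t k` as leading exponents if and only if it satisfies the restricted system. -/
theorem refining_criterion {n ℓ : ℕ} {K : Type*} [Field K]
    (g : Fin ℓ → MvPolynomial (Fin n) K) (hg : ∀ k, g k ≠ 0)
    (t : Fin ℓ → (Fin n →₀ ℕ)) (ht : ∀ k, t k ∈ (g k).support)
    (P : Fin ℓ → Set (Fin n →₀ ℕ))
    (hP : ∀ k, P k = {u | u ∈ (g k).support ∧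
      ∃ μ : MonomialOrder (Fin n),
        (∀ j, j < k → IsLeadingExp μ (g j) (t j)) ∧ IsLeadingExp μ (g k) u})
    (σ : MonomialOrder (Fin n)) :
    ((∀ k, ∀ u ∈ (g k).support, u ≠ t k → u ≺[σ] t k) ↔
      (∀ k, ∀ u ∈ P k, u ≠ t k → u ≺[σ] t k)) ∧
    ((∀ k, IsLeadingExp σ (g k) (t k)) ↔
      (∀ k, ∀ u ∈ P k, u ≠ t k → u ≺[σ] t k)) := by
  -- the full system is equivalent to selecting all leading exponents
  have hfull_iff : (∀ k, ∀ u ∈ (g k).support, u ≠ t k → u ≺[σ] t k) ↔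
      (∀ k, IsLeadingExp σ (g k) (t k)) := by
    constructor
    · intro h k
      refine ⟨ht k, fun u hu => ?_⟩
      rcases eq_or_ne u (t k) with rfl | hne
      · exact le_refl _
      · exact le_of_lt (h k u hu hne)
    · intro h k u hu hne
      exact lt_of_le_of_ne ((h k).2 u hu) (fun e => hne (σ.toSyn.injective e))
  have main : (∀ k, ∀ u ∈ P k, u ≠ t k → u ≺[σ] t k) →
      (∀ k, ∀ u ∈ (g k).support, u ≠ t k → u ≺[σ] t k) := by
    intro hres
    -- strong induction on k.val
    have key : ∀ m : ℕ, ∀ k : Fin ℓ, k.val < m →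
        ∀ u ∈ (g k).support, u ≠ t k → u ≺[σ] t k := by
      intro m
      induction m with
      | zero => intro k hk; omega
      | succ m ih =>
        intro k hk u hu hne
        rcases Nat.lt_succ_iff_lt_or_eq.mp hk with h | h
        · exact ih k h u hu hne
        -- σ-leading exponents of earlier polynomials are the t j
        have hprev : ∀ j, j < k → IsLeadingExp σ (g j) (t j) := by
          intro j hj
          refine ⟨ht j, fun v hv => ?_⟩
          rcases eq_or_ne v (t j) with rfl | hvne
          · exact le_refl _
          · exact le_of_lt (ih j (by omega) v hv hvne)
        -- the σ-max element of supp (g k)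
        obtain ⟨w, hw, hwmax⟩ := ((g k).support).exists_max_image σ.toSyn
          (MvPolynomial.support_nonempty.mpr (hg k))
        have hwP : w ∈ P k := by
          rw [hP k]
          refine ⟨hw, MonomialOrder.shrink σ, fun j hj => ?_, hw, fun v hv => (σ.shrink_le _ _).mpr (hwmax v hv)⟩
          obtain ⟨h1, h2⟩ := hprev j hj
          exact ⟨h1, fun v hv => (σ.shrink_le _ _).mpr (h2 v hv)⟩
        rcases eq_or_ne w (t k) with rfl | hwne
        · exact lt_of_le_of_ne (hwmax u hu)
            (fun e => hne (σ.toSyn.injective e))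
        · exact absurd (hres k w hwP hwne) (not_lt.mpr (hwmax (t k) (ht k)))
    intro k
    exact key (k.val + 1) k (Nat.lt_succ_self _)
  have h1 : (∀ k, ∀ u ∈ (g k).support, u ≠ t k → u ≺[σ] t k) ↔
      (∀ k, ∀ u ∈ P k, u ≠ t k → u ≺[σ] t k) := by
    constructor
    · intro h k u hu hne
      have hsupp : u ∈ (g k).support := by rw [hP k] at hu; exact hu.1
      exact h k u hsupp hne
    · exact main
  exact ⟨h1, hfull_iff.symm.trans h1⟩
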